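/- Let Φ: X₁ → X₂ be an injective morphism of measure spaces between (X₁, 𝒜₁, μ₁) and (X₂, 𝒜₂, μ₂) (with measurable images of measurable sets). Let λ₁, λ₂ be complex (signed, finite) measures on X₁, X₂ respectively, with Lebesgue decompositions λ₁ = λ₁ₐ + λ₁ₛ relative to μ₁ and λ₂ = λ₂ₐ + λ₂ₛ relative to μ₂. If Φ∗λ₁ = λ₂, then Φ∗λ₁ₐ = λ₂ₐ and Φ∗λ₁ₛ = λ₂ₛ. -/

import Mathlib

open MeasureTheory

/-- Stability of the Lebesgue decomposition under an injective morphism of measure spaces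
(mapping measurable sets to measurable sets): if `Φ∗λ₁ = λ₂`, where `λ₁ = λ₁ₐ + λ₁ₛ` and
`λ₂ = λ₂ₐ + λ₂ₛ` are the Lebesgue decompositions of the signed (finite) measures `λ₁`, `λ₂`
relative to the σ-finite measures `μ₁`, `μ₂` respectively, then `Φ∗λ₁ₐ = λ₂ₐ` and
`Φ∗λ₁ₛ = λ₂ₛ`. -/
theorem stmt4 {X₁ X₂ : Type*} [MeasurableSpace X₁] [MeasurableSpace X₂]
    (μ₁ : Measure X₁) (μ₂ : Measure X₂) [SigmaFinite μ₁] [SigmaFinite μ₂]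
    (Φ : X₁ → X₂) (hΦ : Measurable Φ) (hinj : Function.Injective Φ)
    (himg : ∀ A : Set X₁, MeasurableSet A → MeasurableSet (Φ '' A))
    (hmor : μ₁.map Φ = μ₂)
    (lam₁ lam₁a lam₁s : SignedMeasure X₁) (lam₂ lam₂a lam₂s : SignedMeasure X₂)
    (hdec₁ : lam₁ = lam₁a + lam₁s)
    (hac₁ : ∀ E : Set X₁, MeasurableSet E → μ₁ E = 0 → lam₁a E = 0)
    (hsing₁ : ∃ V W : Set X₁, MeasurableSet V ∧ MeasurableSet W ∧ Disjoint V W ∧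
      (∀ Z : Set X₁, MeasurableSet Z → μ₁ Z = μ₁ (Z ∩ V)) ∧
      (∀ Z : Set X₁, MeasurableSet Z → lam₁s Z = lam₁s (Z ∩ W)))
    (hdec₂ : lam₂ = lam₂a + lam₂s)
    (hac₂ : ∀ E : Set X₂, MeasurableSet E → μ₂ E = 0 → lam₂a E = 0)
    (hsing₂ : ∃ V W : Set X₂, MeasurableSet V ∧ MeasurableSet W ∧ Disjoint V W ∧
      (∀ Z : Set X₂, MeasurableSet Z → μ₂ Z = μ₂ (Z ∩ V)) ∧
      (∀ Z : Set X₂, MeasurableSet Z → lam₂s Z = lam₂s (Z ∩ W)))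
    (hpush : lam₁.map Φ = lam₂) :
    lam₁a.map Φ = lam₂a ∧ lam₁s.map Φ = lam₂s := by
  obtain ⟨V₁, W₁, hV₁, hW₁, hVW₁, hμ₁V, hconc₁⟩ := hsing₁
  obtain ⟨V₂, W₂, hV₂, hW₂, hVW₂, hμ₂V, hconc₂⟩ := hsing₂
  set ν := lam₁a.map Φ with hν
  set σ := lam₁s.map Φ with hσ
  -- sum
  have hsum : ν + σ = lam₂a + lam₂s := by
    rw [hν, hσ, ← VectorMeasure.map_add, ← hdec₁, hpush, hdec₂]
  -- ν absolutely continuous w.r.t. μ₂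
  have hacν : ∀ E : Set X₂, MeasurableSet E → μ₂ E = 0 → ν E = 0 := by
    intro E hE hE0
    rw [hν, VectorMeasure.map_apply _ hΦ hE]
    apply hac₁ _ (hΦ hE)
    rw [← hmor, Measure.map_apply hΦ hE] at hE0
    exact hE0
  -- W' := Φ '' W₁
  set W' : Set X₂ := Φ '' W₁ with hW'def
  have hW' : MeasurableSet W' := himg _ hW₁
  -- μ₂ (Z ∩ W') = 0 for measurable Z
  have hμW' : ∀ Z : Set X₂, MeasurableSet Z → μ₂ (Z ∩ W') = 0 := by
    intro Z hZ
    rw [← hmor, Measure.map_apply hΦ (hZ.inter hW')]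
    have hpre : Φ ⁻¹' (Z ∩ W') = Φ ⁻¹' Z ∩ W₁ := by
      rw [Set.preimage_inter, Set.preimage_image_eq _ hinj]
    rw [hpre, hμ₁V _ ((hΦ hZ).inter hW₁)]
    have : Φ ⁻¹' Z ∩ W₁ ∩ V₁ = ∅ := by
      rw [Set.inter_assoc]
      rw [Set.disjoint_iff_inter_eq_empty] at hVW₁
      rw [Set.inter_comm W₁ V₁, hVW₁, Set.inter_empty]
    rw [this]; simp
  -- σ concentrated on W'
  have hconcσ : ∀ Z : Set X₂, MeasurableSet Z → σ Z = σ (Z ∩ W') := by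
    intro Z hZ
    rw [hσ, VectorMeasure.map_apply _ hΦ hZ,
      VectorMeasure.map_apply _ hΦ (hZ.inter hW')]
    have hpre : Φ ⁻¹' (Z ∩ W') = Φ ⁻¹' Z ∩ W₁ := by
      rw [Set.preimage_inter, Set.preimage_image_eq _ hinj]
    rw [hpre]
    exact hconc₁ _ (hΦ hZ)
  -- combined carrier W
  set W : Set X₂ := W₂ ∪ W' with hWdef
  have hW : MeasurableSet W := hW₂.union hW'
  -- lam₂s concentrated on W and σ concentrated on W
  have hconc₂' : ∀ Z : Set X₂, MeasurableSet Z → lam₂s Z = lam₂s (Z ∩ W) := by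
    intro Z hZ
    rw [hconc₂ _ hZ, hconc₂ _ (hZ.inter hW)]
    congr 1
    rw [Set.inter_assoc, Set.union_inter_cancel_left]
  have hconcσ' : ∀ Z : Set X₂, MeasurableSet Z → σ Z = σ (Z ∩ W) := by
    intro Z hZ
    rw [hconcσ _ hZ, hconcσ _ (hZ.inter hW)]
    congr 1
    rw [Set.inter_assoc, hWdef, Set.union_inter_cancel_right]
  -- μ₂ (E ∩ W) = 0 for measurable E
  have hμW : ∀ E : Set X₂, MeasurableSet E → μ₂ (E ∩ W) = 0 := by
    intro E hE
    have h1 : μ₂ (E ∩ W) = μ₂ (E ∩ W ∩ V₂) := hμ₂V _ (hE.inter hW)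
    have h2 : E ∩ W ∩ V₂ = E ∩ (W ∩ V₂) := by rw [Set.inter_assoc]
    have h3 : W ∩ V₂ ⊆ W' := by
      intro x hx
      rcases hx.1 with h | h
      · exact absurd (Set.disjoint_right.mp hVW₂ h) (fun hn => hn hx.2)
      · exact h
    have h4 : μ₂ (E ∩ (W ∩ V₂)) ≤ μ₂ (E ∩ W') :=
      measure_mono (Set.inter_subset_inter_right _ h3)
    rw [h1, h2]
    exact le_antisymm (by rw [hμW' E hE] at h4; exact h4) zero_le
  -- equality on every measurable set
  have hkey : ∀ E : Set X₂, MeasurableSet E → ν E = lam₂a E := by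
    intro E hE
    have hsumE : ν E + σ E = lam₂a E + lam₂s E := by
      have := congrArg (fun m : SignedMeasure X₂ => m E) hsum
      simpa using this
    have hsumEW : ν (E ∩ W) + σ (E ∩ W) = lam₂a (E ∩ W) + lam₂s (E ∩ W) := by
      have := congrArg (fun m : SignedMeasure X₂ => m (E ∩ W)) hsum
      simpa using this
    have hνW : ν (E ∩ W) = 0 := hacν _ (hE.inter hW) (hμW E hE)
    have haW : lam₂a (E ∩ W) = 0 := hac₂ _ (hE.inter hW) (hμW E hE)
    have hσE : σ E = σ (E ∩ W) := hconcσ' E hE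
    have hsE : lam₂s E = lam₂s (E ∩ W) := hconc₂' E hE
    rw [hνW, haW, zero_add, zero_add] at hsumEW
    rw [hσE, hsE, hsumEW] at hsumE
    linarith
  have hνeq : ν = lam₂a := by
    ext E hE
    exact hkey E hE
  refine ⟨hνeq, ?_⟩
  have : σ = lam₂s := by
    have := hsum
    rw [hνeq] at this
    exact add_left_cancel this
  exact this
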